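/- Let x_1, …, x_n ∈ ℝ^{2n} be an orthonormal family spanning a Lagrangian subspace, i.e. x_iᵀ x_j = δ_{ij} and x_iᵀ J x_j = 0 for all i, j. Then the matrix Ĥ := X_R X_Lᵀ + Jᵀ X_L X_Rᵀ J is nilpotent with Ĥⁿ = 0. -/
import Mathlib


open Matrix

noncomputable section

/-- The canonical skew-symmetric matrix `J = [[0, I],[-I, 0]]`. -/
def Jmat (n : ℕ) : Matrix (Fin n ⊕ Fin n) (Fin n ⊕ Fin n) ℝ :=
  Matrix.fromBlocks 0 1 (-1) 0

/-- A matrix `H` is skew-Hamiltonian if `Jᵀ Hᵀ J = H`. -/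
def IsSkewHamiltonian {n : ℕ} (H : Matrix (Fin n ⊕ Fin n) (Fin n ⊕ Fin n) ℝ) : Prop :=
  (Jmat n)ᵀ * Hᵀ * Jmat n = H

/-- `X_L = [x_1 ⋯ x_{n-1}]`. -/
def XL {n : ℕ} (x : Fin n → (Fin n ⊕ Fin n) → ℝ) :
    Matrix (Fin n ⊕ Fin n) (Fin (n - 1)) ℝ :=
  Matrix.of fun i j => x ⟨j.1, lt_of_lt_of_le j.2 (Nat.sub_le n 1)⟩ i

/-- `X_R = [x_2 ⋯ x_n]`. -/
def XR {n : ℕ} (x : Fin n → (Fin n ⊕ Fin n) → ℝ) :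
    Matrix (Fin n ⊕ Fin n) (Fin (n - 1)) ℝ :=
  Matrix.of fun i j => x ⟨j.1 + 1, by have := j.2; omega⟩ i

/-- The Moore–Penrose pseudoinverse `X_L⁺ = (X_Lᵀ X_L)⁻¹ X_Lᵀ` of `X_L`
(for `X_L` with linearly independent columns). -/
def XLpinv {n : ℕ} (x : Fin n → (Fin n ⊕ Fin n) → ℝ) :
    Matrix (Fin (n - 1)) (Fin n ⊕ Fin n) ℝ :=
  ((XL x)ᵀ * XL x)⁻¹ * (XL x)ᵀ

/-- `Ĥ = X_R X_L⁺ + Jᵀ (X_R X_L⁺)ᵀ J`. -/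
def Hhat {n : ℕ} (x : Fin n → (Fin n ⊕ Fin n) → ℝ) :
    Matrix (Fin n ⊕ Fin n) (Fin n ⊕ Fin n) ℝ :=
  XR x * XLpinv x + (Jmat n)ᵀ * (XR x * XLpinv x)ᵀ * Jmat n

/-- `H` realizes the Krylov relations `H x_k = x_{k+1}`, `k = 1, …, n-1`. -/
def KrylovRel {n : ℕ} (H : Matrix (Fin n ⊕ Fin n) (Fin n ⊕ Fin n) ℝ)
    (x : Fin n → (Fin n ⊕ Fin n) → ℝ) : Prop :=
  ∀ k : Fin (n - 1), H *ᵥ x ⟨k.1, lt_of_lt_of_le k.2 (Nat.sub_le n 1)⟩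
    = x ⟨k.1 + 1, by have := k.2; omega⟩

lemma Jmat_transpose (n : ℕ) : (Jmat n)ᵀ = -Jmat n := by
  simp [Jmat, fromBlocks_transpose, fromBlocks_neg]

lemma Jmat_mul_Jmat (n : ℕ) : Jmat n * Jmat n = -1 := by
  simp [Jmat, fromBlocks_multiply, fromBlocks_neg, ← fromBlocks_one]

lemma XLt_mulVec {n : ℕ} (x : Fin n → (Fin n ⊕ Fin n) → ℝ) (v : (Fin n ⊕ Fin n) → ℝ)
    (j : Fin (n-1)) :
    ((XL x)ᵀ *ᵥ v) j = x ⟨j.1, lt_of_lt_of_le j.2 (Nat.sub_le n 1)⟩ ⬝ᵥ v := rfl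

lemma XRt_mulVec {n : ℕ} (x : Fin n → (Fin n ⊕ Fin n) → ℝ) (v : (Fin n ⊕ Fin n) → ℝ)
    (j : Fin (n-1)) :
    ((XR x)ᵀ *ᵥ v) j = x ⟨j.1 + 1, by have := j.2; omega⟩ ⬝ᵥ v := rfl

lemma block1_x {n : ℕ} (x : Fin n → (Fin n ⊕ Fin n) → ℝ)
    (hON : ∀ i j : Fin n, x i ⬝ᵥ x j = if i = j then 1 else 0) (k : Fin n) :
    (XR x * (XL x)ᵀ) *ᵥ x k = if h : k.1 + 1 < n then x ⟨k.1+1, h⟩ else 0 := by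
  rw [← mulVec_mulVec]
  have hXL : (XL x)ᵀ *ᵥ x k = fun j : Fin (n-1) => if j.1 = k.1 then 1 else 0 := by
    funext j
    rw [XLt_mulVec, hON]
    simp [Fin.ext_iff]
  rw [hXL]
  funext i
  simp only [mulVec, dotProduct, XR, Matrix.of_apply, mul_ite, mul_one, mul_zero]
  split
  · next h =>
    rw [Finset.sum_eq_single (⟨k.1, by omega⟩ : Fin (n-1))]
    · simp
    · intro b _ hb
      have : b.1 ≠ k.1 := fun hc => hb (by ext; exact hc)
      simp [this]
    · simp
  · next h =>
    rw [Pi.zero_apply]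
    apply Finset.sum_eq_zero; intro j _
    have : j.1 ≠ k.1 := by have := j.2; omega
    simp [this]

lemma block2_x {n : ℕ} (x : Fin n → (Fin n ⊕ Fin n) → ℝ)
    (hLag : ∀ i j : Fin n, x i ⬝ᵥ (Jmat n *ᵥ x j) = 0) (k : Fin n) :
    ((Jmat n)ᵀ * (XL x * (XR x)ᵀ) * Jmat n) *ᵥ x k = 0 := by
  rw [← mulVec_mulVec, ← mulVec_mulVec, ← mulVec_mulVec]
  have : (XR x)ᵀ *ᵥ (Jmat n *ᵥ x k) = 0 := by
    funext j
    rw [XRt_mulVec, hLag, Pi.zero_apply]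
  rw [this, mulVec_zero, mulVec_zero]

lemma block1_Jx {n : ℕ} (x : Fin n → (Fin n ⊕ Fin n) → ℝ)
    (hLag : ∀ i j : Fin n, x i ⬝ᵥ (Jmat n *ᵥ x j) = 0) (k : Fin n) :
    (XR x * (XL x)ᵀ) *ᵥ (Jmat n *ᵥ x k) = 0 := by
  rw [← mulVec_mulVec]
  have : (XL x)ᵀ *ᵥ (Jmat n *ᵥ x k) = 0 := by
    funext j
    rw [XLt_mulVec, hLag, Pi.zero_apply]
  rw [this, mulVec_zero]

lemma block2_Jx {n : ℕ} (x : Fin n → (Fin n ⊕ Fin n) → ℝ)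
    (hON : ∀ i j : Fin n, x i ⬝ᵥ x j = if i = j then 1 else 0) (k : Fin n) :
    ((Jmat n)ᵀ * (XL x * (XR x)ᵀ) * Jmat n) *ᵥ (Jmat n *ᵥ x k)
      = if h : 0 < k.1 then Jmat n *ᵥ x ⟨k.1 - 1, by omega⟩ else 0 := by
  rw [mulVec_mulVec, mul_assoc, mul_assoc, Jmat_mul_Jmat]
  have hXR : (XR x)ᵀ *ᵥ x k = fun j : Fin (n-1) => if j.1 + 1 = k.1 then 1 else 0 := by
    funext j
    rw [XRt_mulVec, hON]
    simp [Fin.ext_iff]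
  have hmid : (XL x * (XR x)ᵀ) *ᵥ x k
      = if h : 0 < k.1 then x ⟨k.1 - 1, by omega⟩ else 0 := by
    rw [← mulVec_mulVec, hXR]
    funext i
    simp only [mulVec, dotProduct, XL, Matrix.of_apply, mul_ite, mul_one, mul_zero]
    split
    · next h =>
      rw [Finset.sum_eq_single (⟨k.1 - 1, by have := k.2; omega⟩ : Fin (n-1))]
      · simp [Nat.sub_add_cancel h]
      · intro b _ hb
        have : b.1 + 1 ≠ k.1 := fun hc => hb (Fin.ext (show b.1 = k.1 - 1 by omega))
        simp [this]
      · simp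
    · next h =>
      rw [Pi.zero_apply]
      apply Finset.sum_eq_zero; intro j _
      have : j.1 + 1 ≠ k.1 := by omega
      simp [this]
  rw [mul_neg_one, mul_neg, neg_mulVec, ← mulVec_mulVec, hmid, Jmat_transpose, neg_mulVec,
    neg_neg]
  split
  · rfl
  · rw [mulVec_zero]

lemma Hact_x {n : ℕ} (x : Fin n → (Fin n ⊕ Fin n) → ℝ)
    (hON : ∀ i j : Fin n, x i ⬝ᵥ x j = if i = j then 1 else 0)
    (hLag : ∀ i j : Fin n, x i ⬝ᵥ (Jmat n *ᵥ x j) = 0) (k : Fin n) :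
    (XR x * (XL x)ᵀ + (Jmat n)ᵀ * (XL x * (XR x)ᵀ) * Jmat n) *ᵥ x k
      = if h : k.1 + 1 < n then x ⟨k.1+1, h⟩ else 0 := by
  rw [add_mulVec, block1_x x hON k, block2_x x hLag k, add_zero]

lemma Hact_Jx {n : ℕ} (x : Fin n → (Fin n ⊕ Fin n) → ℝ)
    (hON : ∀ i j : Fin n, x i ⬝ᵥ x j = if i = j then 1 else 0)
    (hLag : ∀ i j : Fin n, x i ⬝ᵥ (Jmat n *ᵥ x j) = 0) (k : Fin n) :
    (XR x * (XL x)ᵀ + (Jmat n)ᵀ * (XL x * (XR x)ᵀ) * Jmat n) *ᵥ (Jmat n *ᵥ x k)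
      = if h : 0 < k.1 then Jmat n *ᵥ x ⟨k.1 - 1, by omega⟩ else 0 := by
  rw [add_mulVec, block1_Jx x hLag k, block2_Jx x hON k, zero_add]

lemma Hpow_x {n : ℕ} (x : Fin n → (Fin n ⊕ Fin n) → ℝ)
    (hON : ∀ i j : Fin n, x i ⬝ᵥ x j = if i = j then 1 else 0)
    (hLag : ∀ i j : Fin n, x i ⬝ᵥ (Jmat n *ᵥ x j) = 0) :
    ∀ (m : ℕ) (k : Fin n), n ≤ k.1 + m →
      (XR x * (XL x)ᵀ + (Jmat n)ᵀ * (XL x * (XR x)ᵀ) * Jmat n) ^ m *ᵥ x k = 0 := by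
  intro m
  induction m with
  | zero => intro k hk; exact absurd k.2 (by omega)
  | succ m ih =>
    intro k hk
    rw [pow_succ, ← mulVec_mulVec, Hact_x x hON hLag k]
    split
    · next h => exact ih ⟨k.1+1, h⟩ (by simpa using by omega)
    · rw [mulVec_zero]

lemma Hpow_Jx {n : ℕ} (x : Fin n → (Fin n ⊕ Fin n) → ℝ)
    (hON : ∀ i j : Fin n, x i ⬝ᵥ x j = if i = j then 1 else 0)
    (hLag : ∀ i j : Fin n, x i ⬝ᵥ (Jmat n *ᵥ x j) = 0) :
    ∀ (m : ℕ) (k : Fin n), k.1 < m →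
      (XR x * (XL x)ᵀ + (Jmat n)ᵀ * (XL x * (XR x)ᵀ) * Jmat n) ^ m *ᵥ (Jmat n *ᵥ x k) = 0 := by
  intro m
  induction m with
  | zero => intro k hk; omega
  | succ m ih =>
    intro k hk
    rw [pow_succ, ← mulVec_mulVec, Hact_Jx x hON hLag k]
    split
    · next h => exact ih ⟨k.1-1, by omega⟩ (by simp; omega)
    · rw [mulVec_zero]

lemma Jmat_t_mul_Jmat (n : ℕ) : (Jmat n)ᵀ * Jmat n = 1 := by
  rw [Jmat_transpose, neg_mul, Jmat_mul_Jmat, neg_neg]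

lemma Jdot (n : ℕ) (u v : (Fin n ⊕ Fin n) → ℝ) :
    (Jmat n *ᵥ u) ⬝ᵥ (Jmat n *ᵥ v) = u ⬝ᵥ v := by
  rw [← vecMul_transpose, ← dotProduct_mulVec, mulVec_mulVec, Jmat_t_mul_Jmat, one_mulVec]

/-- For an orthonormal basis of a Lagrangian subspace, the matrix
`Ĥ = X_R X_Lᵀ + Jᵀ X_L X_Rᵀ J` is nilpotent with `Ĥ^n = 0`. -/
theorem Hhat_nilpotent {n : ℕ} (x : Fin n → (Fin n ⊕ Fin n) → ℝ)
    (hON : ∀ i j : Fin n, x i ⬝ᵥ x j = if i = j then 1 else 0)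
    (hLag : ∀ i j : Fin n, x i ⬝ᵥ (Jmat n *ᵥ x j) = 0) :
    (XR x * (XL x)ᵀ + (Jmat n)ᵀ * (XL x * (XR x)ᵀ) * Jmat n) ^ n = 0 := by
  set H := XR x * (XL x)ᵀ + (Jmat n)ᵀ * (XL x * (XR x)ᵀ) * Jmat n with hH
  set Y : Matrix (Fin n ⊕ Fin n) (Fin n ⊕ Fin n) ℝ :=
    Matrix.of fun i c => Sum.elim (fun k => x k i) (fun k => (Jmat n *ᵥ x k) i) c with hY
  have hYunit : Yᵀ * Y = 1 := by
    ext a b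
    have hab : (Yᵀ * Y) a b
        = (Sum.elim x (fun k => Jmat n *ᵥ x k) a) ⬝ᵥ (Sum.elim x (fun k => Jmat n *ᵥ x k) b) := by
      cases a <;> cases b <;> simp [mul_apply, dotProduct, hY]
    rw [hab]
    cases a with
    | inl a =>
      cases b with
      | inl b => simp [hON a b, one_apply]
      | inr b => simp [hLag a b, one_apply]
    | inr a =>
      cases b with
      | inl b => simp [dotProduct_comm, hLag b a, one_apply]
      | inr b => simp [Jdot, hON a b, one_apply]
  have hYY : Y * Yᵀ = 1 := mul_eq_one_comm.mpr hYunit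
  have hHY : H ^ n * Y = 0 := by
    ext i c
    have : (H ^ n * Y) i c = (H ^ n *ᵥ (Sum.elim x (fun k => Jmat n *ᵥ x k) c)) i := by
      cases c <;> simp [mul_apply, mulVec, dotProduct, hY]
    rw [this]
    cases c with
    | inl k =>
      simp only [Sum.elim_inl, hH]
      rw [Hpow_x x hON hLag n k (by omega)]
      simp
    | inr k =>
      simp only [Sum.elim_inr, hH]
      rw [Hpow_Jx x hON hLag n k k.2]
      simp
  calc H ^ n = H ^ n * (Y * Yᵀ) := by rw [hYY, mul_one]
    _ = (H ^ n * Y) * Yᵀ := by rw [mul_assoc]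
    _ = 0 := by rw [hHY, zero_mul]
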